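/- Let A and B be Γ-order-ideals of a commutative refinement Γ-monoid T with A ∩ B = {0}. Then (A+B)/A is isomorphic to B as monoids, via the map ρ_A(a+b) ↦ b. -/

import Mathlib

open Pointwise

namespace JH

variable {Γ : Type*} {T : Type*} [AddCommMonoid T]

/-- `x ρ_H y` iff `(x+H) ∩ (y+H) ≠ ∅`. -/
def rho (H : Set T) (x y : T) : Prop := ∃ h₁ ∈ H, ∃ h₂ ∈ H, x + h₁ = y + h₂

/-- The congruence on `T` induced by a submonoid `I`. -/
def subCon (I : AddSubmonoid T) : AddCon T where
  r := rho (I : Set T)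
  iseqv := by
    constructor
    · exact fun x => ⟨0, I.zero_mem, 0, I.zero_mem, rfl⟩
    · rintro x y ⟨h₁, m₁, h₂, m₂, e⟩; exact ⟨h₂, m₂, h₁, m₁, e.symm⟩
    · rintro x y z ⟨h₁, m₁, h₂, m₂, e₁⟩ ⟨k₁, n₁, k₂, n₂, e₂⟩
      refine ⟨h₁ + k₁, I.add_mem m₁ n₁, k₂ + h₂, I.add_mem n₂ m₂, ?_⟩
      calc x + (h₁ + k₁) = (x + h₁) + k₁ := (add_assoc _ _ _).symm
        _ = (y + h₂) + k₁ := by rw [e₁]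
        _ = (y + k₁) + h₂ := add_right_comm _ _ _
        _ = (z + k₂) + h₂ := by rw [e₂]
        _ = z + (k₂ + h₂) := add_assoc _ _ _
  add' := by
    rintro w x y z ⟨h₁, m₁, h₂, m₂, e₁⟩ ⟨k₁, n₁, k₂, n₂, e₂⟩
    refine ⟨h₁ + k₁, I.add_mem m₁ n₁, h₂ + k₂, I.add_mem m₂ n₂, ?_⟩
    calc w + y + (h₁ + k₁) = (w + h₁) + (y + k₁) := add_add_add_comm _ _ _ _
      _ = (x + h₂) + (z + k₂) := by rw [e₁, e₂]
      _ = x + z + (h₂ + k₂) := (add_add_add_comm _ _ _ _).symm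

/-- The quotient monoid `T/I`. -/
abbrev QuotM (I : AddSubmonoid T) : Type _ := (subCon I).Quotient

variable [CommGroup Γ] [DistribMulAction Γ T]

/-- A `Γ`-order-ideal of a `Γ`-monoid: `α•a + β•b ∈ I ↔ a ∈ I ∧ b ∈ I`. -/
def IsOrdIdeal (Γ : Type*) {T : Type*} [CommGroup Γ] [AddCommMonoid T]
    [DistribMulAction Γ T] (I : Set T) : Prop :=
  (0 : T) ∈ I ∧ ∀ (α β : Γ) (a b : T), α • a + β • b ∈ I ↔ a ∈ I ∧ b ∈ I

theorem IsOrdIdeal.add_mem {I : Set T} (h : IsOrdIdeal Γ I) {a b : T}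
    (ha : a ∈ I) (hb : b ∈ I) : a + b ∈ I := by
  have := (h.2 1 1 a b).mpr ⟨ha, hb⟩
  simpa using this

/-- A `Γ`-order-ideal as an additive submonoid. -/
def IsOrdIdeal.asSubmonoid {I : Set T} (h : IsOrdIdeal Γ I) : AddSubmonoid T where
  carrier := I
  zero_mem' := h.1
  add_mem' := fun ha hb => h.add_mem ha hb

theorem IsOrdIdeal.smul_mem {I : Set T} (h : IsOrdIdeal Γ I) (α : Γ) {x : T}
    (hx : x ∈ I) : α • x ∈ I := by
  have := (h.2 α 1 x 0).mpr ⟨hx, h.1⟩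
  simpa using this

/-- The induced scalar action on the quotient. -/
def quotSMulFun {I : Set T} (h : IsOrdIdeal Γ I) (α : Γ) :
    QuotM h.asSubmonoid → QuotM h.asSubmonoid :=
  Quotient.map' (fun x => α • x) (by
    rintro x y ⟨h₁, m₁, h₂, m₂, e⟩
    exact ⟨α • h₁, h.smul_mem α m₁, α • h₂, h.smul_mem α m₂, by
      rw [← smul_add, ← smul_add, e]⟩)

/-- The induced `Γ`-action on the quotient monoid `T/I`. -/
def quotAction {I : Set T} (h : IsOrdIdeal Γ I) :
    DistribMulAction Γ (QuotM h.asSubmonoid) where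
  smul := quotSMulFun h
  one_smul q := by
    refine Quotient.inductionOn' q (fun x => ?_)
    show Quotient.mk'' ((1 : Γ) • x) = Quotient.mk'' x
    rw [one_smul]
  mul_smul α β q := by
    refine Quotient.inductionOn' q (fun x => ?_)
    show Quotient.mk'' ((α * β) • x) = Quotient.mk'' (α • β • x)
    rw [mul_smul]
  smul_zero α := by
    show Quotient.mk'' (α • (0 : T)) = Quotient.mk'' (0 : T)
    rw [smul_zero]
  smul_add α q r := by
    refine Quotient.inductionOn₂' q r (fun x y => ?_)
    show Quotient.mk'' (α • (x + y)) = Quotient.mk'' (α • x + α • y)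
    rw [smul_add]

/-- The `Γ`-action on a `Γ`-order-ideal, viewed as a submonoid. -/
def subtypeAction {J : Set T} (hJ : IsOrdIdeal Γ J) :
    DistribMulAction Γ ↥hJ.asSubmonoid where
  smul α x := ⟨α • (x : T), hJ.smul_mem α x.2⟩
  one_smul x := Subtype.ext (one_smul Γ (x : T))
  mul_smul α β x := Subtype.ext (mul_smul α β (x : T))
  smul_zero α := Subtype.ext (smul_zero α)
  smul_add α x y := Subtype.ext (smul_add α (x : T) (y : T))

/-- The restriction of a set `I` to (the submonoid given by) an ideal `J`. -/
def restrictSet {J : Set T} (hJ : IsOrdIdeal Γ J) (I : Set T) :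
    Set ↥hJ.asSubmonoid := {x | (x : T) ∈ I}

theorem restrict_isOrdIdeal {I J : Set T} (hI : IsOrdIdeal Γ I) (hJ : IsOrdIdeal Γ J) :
    @IsOrdIdeal Γ ↥hJ.asSubmonoid _ _ (subtypeAction hJ) (restrictSet hJ I) := by
  refine ⟨hI.1, fun α β a b => ?_⟩
  exact hI.2 α β (a : T) (b : T)

/-- The quotient `Γ`-monoid `J/I` of two `Γ`-order-ideals. -/
abbrev QuotPair {I J : Set T} (hI : IsOrdIdeal Γ I) (hJ : IsOrdIdeal Γ J) : Type _ :=
  QuotM (@IsOrdIdeal.asSubmonoid Γ _ _ _ (subtypeAction hJ) _ (restrict_isOrdIdeal hI hJ))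

/-- The induced `Γ`-action on `J/I`. -/
def quotPairAction {I J : Set T} (hI : IsOrdIdeal Γ I) (hJ : IsOrdIdeal Γ J) :
    DistribMulAction Γ (QuotPair hI hJ) :=
  letI := subtypeAction hJ
  quotAction (restrict_isOrdIdeal hI hJ)

/-- A simple `Γ`-monoid: nontrivial with no `Γ`-order-ideals except `0` and itself. -/
def IsSimple (Γ : Type*) (M : Type*) [CommGroup Γ] [AddCommMonoid M]
    [DistribMulAction Γ M] : Prop :=
  (∃ x : M, x ≠ 0) ∧ ∀ I : Set M, IsOrdIdeal Γ I → I = {0} ∨ I = Set.univ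

/-- A refinement monoid. -/
def Refinement (T : Type*) [AddCommMonoid T] : Prop :=
  ∀ a b c d : T, a + b = c + d →
    ∃ e₁ e₂ e₃ e₄ : T, a = e₁ + e₂ ∧ b = e₃ + e₄ ∧ c = e₁ + e₃ ∧ d = e₂ + e₄

/-- `Γ`-equivariant monoid isomorphism. -/
def IsGammaIso (Γ : Type*) (M N : Type*) [CommGroup Γ] [AddCommMonoid M]
    [AddCommMonoid N] [DistribMulAction Γ M] [DistribMulAction Γ N] : Prop :=
  ∃ e : M ≃+ N, ∀ (α : Γ) (x : M), e (α • x) = α • (e x)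

/-- A `Γ`-composition series of a `Γ`-monoid. -/
structure CompSeries (Γ : Type*) (M : Type*) [CommGroup Γ] [AddCommMonoid M]
    [DistribMulAction Γ M] where
  n : ℕ
  I : ℕ → Set M
  ideal : ∀ i, i ≤ n → IsOrdIdeal Γ (I i)
  bot : I 0 = {0}
  top : I n = Set.univ
  strict : ∀ i, i < n → I i ⊂ I (i + 1)
  simple : ∀ i (h : i < n),
    @IsSimple Γ (QuotPair (ideal i h.le) (ideal (i + 1) h)) _ _
      (quotPairAction (ideal i h.le) (ideal (i + 1) h))

/-- `Γ`-Noetherian: every ascending chain of `Γ`-order-ideals stabilizes. -/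
def GammaNoetherian (Γ : Type*) (T : Type*) [CommGroup Γ] [AddCommMonoid T]
    [DistribMulAction Γ T] : Prop :=
  ∀ A : ℕ → Set T, (∀ i, IsOrdIdeal Γ (A i)) → (∀ i, A i ⊆ A (i + 1)) →
    ∃ n, ∀ i, n ≤ i → A i = A n

/-- `Γ`-Artinian: every descending chain of `Γ`-order-ideals stabilizes. -/
def GammaArtinian (Γ : Type*) (T : Type*) [CommGroup Γ] [AddCommMonoid T]
    [DistribMulAction Γ T] : Prop :=
  ∀ A : ℕ → Set T, (∀ i, IsOrdIdeal Γ (A i)) → (∀ i, A (i + 1) ⊆ A i) →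
    ∃ n, ∀ i, n ≤ i → A i = A n

/-- Partial sums `I 0 + ⋯ + I (t-1)` of a family of subsets, as submonoids. -/
def sumSeq (I : ℕ → Set T) : ℕ → AddSubmonoid T
  | 0 => ⊥
  | t + 1 => sumSeq I t ⊔ AddSubmonoid.closure (I t)

end JH

open JH in
theorem aux_mem_of_add_mem {Γ T : Type*} [CommGroup Γ] [AddCommMonoid T]
    [DistribMulAction Γ T] {I : Set T} (h : IsOrdIdeal Γ I) {a b : T}
    (hab : a + b ∈ I) : a ∈ I ∧ b ∈ I := by
  exact (h.2 1 1 a b).mp (by simpa using hab)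

open JH in
theorem aux_key {Γ T : Type*} [CommGroup Γ] [AddCommMonoid T] [DistribMulAction Γ T]
    (hT : Refinement T) {A B : Set T}
    (hA : IsOrdIdeal Γ A) (hB : IsOrdIdeal Γ B) (hAB : A ∩ B = {0})
    {u v b b' : T} (hu : u ∈ A) (hv : v ∈ A) (hb : b ∈ B) (hb' : b' ∈ B)
    (h : u + b = v + b') : b = b' := by
  obtain ⟨e₁, e₂, e₃, e₄, h1, h2, h3, h4⟩ := hT u b v b' h
  have hA2 : e₂ ∈ A := (aux_mem_of_add_mem hA (h1 ▸ hu)).2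
  have hA3 : e₃ ∈ A := (aux_mem_of_add_mem hA (h3 ▸ hv)).2
  have hB3 : e₃ ∈ B := (aux_mem_of_add_mem hB (h2 ▸ hb)).1
  have hB2 : e₂ ∈ B := (aux_mem_of_add_mem hB (h4 ▸ hb')).1
  have h2z : e₂ = 0 := by
    have : e₂ ∈ A ∩ B := ⟨hA2, hB2⟩
    rwa [hAB] at this
  have h3z : e₃ = 0 := by
    have : e₃ ∈ A ∩ B := ⟨hA3, hB3⟩
    rwa [hAB] at this
  rw [h2, h4, h2z, h3z]

open JH in
/-- if `A ∩ B = {0}` then `(A+B)/A ≅ B`, via `ρ_A(a+b) ↦ b`. -/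
theorem stmt8 {Γ T : Type*} [CommGroup Γ] [AddCommMonoid T] [DistribMulAction Γ T]
    (hT : Refinement T) {A B : Set T}
    (hA : IsOrdIdeal Γ A) (hB : IsOrdIdeal Γ B) (hAB : A ∩ B = {0}) :
    ∃ e : QuotM ((hA.asSubmonoid).comap
        (hA.asSubmonoid ⊔ hB.asSubmonoid).subtype) ≃+ ↥hB.asSubmonoid,
      ∀ (a b : T) (ha : a ∈ A) (hb : b ∈ B),
        e (AddCon.mk' _ (⟨a + b,
            add_mem (AddSubmonoid.mem_sup_left ha) (AddSubmonoid.mem_sup_right hb)⟩ :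
            ↥(hA.asSubmonoid ⊔ hB.asSubmonoid))) = ⟨b, hb⟩ := by
  classical
  set S := hA.asSubmonoid ⊔ hB.asSubmonoid with hS
  set I := (hA.asSubmonoid).comap S.subtype with hI
  have spec : ∀ x : ↥S, ∃ b : ↥hB.asSubmonoid, ∃ a ∈ A, (x : T) = a + (b : T) := by
    rintro ⟨x, hx⟩
    obtain ⟨a, ha, b, hb, hab⟩ := AddSubmonoid.mem_sup.mp hx
    exact ⟨⟨b, hb⟩, a, ha, hab.symm⟩
  choose g hg using spec
  -- uniqueness of the B-part
  have uniq : ∀ (x : ↥S) (a b : T) (_ : a ∈ A) (hb : b ∈ B),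
      (x : T) = a + b → g x = ⟨b, hb⟩ := by
    intro x a b ha hb hx
    obtain ⟨a', ha', hx'⟩ := hg x
    have : ((g x : T)) = b := aux_key hT hA hB hAB ha' ha (g x).2 hb (hx' ▸ hx)
    exact Subtype.ext this
  have gzero : g 0 = 0 := by
    have := uniq 0 0 0 hA.1 hB.1 (by simp)
    exact this
  have gadd : ∀ x y : ↥S, g (x + y) = g x + g y := by
    intro x y
    obtain ⟨a, ha, hx⟩ := hg x
    obtain ⟨a', ha', hy⟩ := hg y
    have hxy : ((x + y : ↥S) : T) = (a + a') + ((g x : T) + (g y : T)) := by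
      push_cast [hx, hy]
      abel
    exact uniq (x + y) (a + a') _ (hA.add_mem ha ha') ((g x + g y).2) hxy
  set F : ↥S →+ ↥hB.asSubmonoid :=
    { toFun := g, map_zero' := gzero, map_add' := gadd } with hF
  have hle : subCon I ≤ AddCon.ker F := by
    rintro x y ⟨h₁, m₁, h₂, m₂, e⟩
    obtain ⟨a, ha, hx⟩ := hg x
    obtain ⟨a', ha', hy⟩ := hg y
    have e' : (a + (h₁ : T)) + (g x : T) = (a' + (h₂ : T)) + (g y : T) := by
      have : ((x + h₁ : ↥S) : T) = ((y + h₂ : ↥S) : T) := by rw [e]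
      push_cast at this
      rw [hx, hy] at this
      rw [add_right_comm a, this, add_right_comm]
    have hgeq : (g x : T) = (g y : T) :=
      aux_key hT hA hB hAB (hA.add_mem ha m₁) (hA.add_mem ha' m₂) (g x).2 (g y).2 e'
    show F x = F y
    exact Subtype.ext hgeq
  set L := AddCon.lift (subCon I) F hle with hL
  have Lmk : ∀ x : ↥S, L (AddCon.mk' _ x) = g x := fun x => rfl
  refine ⟨{ toFun := L
            invFun := fun b => AddCon.mk' _ (⟨(b : T),
              AddSubmonoid.mem_sup_right b.2⟩ : ↥S)
            left_inv := ?_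
            right_inv := ?_
            map_add' := map_add L }, ?_⟩
  · intro q
    induction q using AddCon.induction_on with
    | H x =>
      show ((⟨(g x : T), AddSubmonoid.mem_sup_right (g x).2⟩ : ↥S) :
        (subCon I).Quotient) = ↑x
      apply (AddCon.eq _).mpr
      obtain ⟨a, ha, hx⟩ := hg x
      have haS : a ∈ S := AddSubmonoid.mem_sup_left ha
      refine ⟨⟨a, haS⟩, ha, 0, I.zero_mem, ?_⟩
      apply Subtype.ext
      push_cast
      rw [add_zero, add_comm, ← hx]
  · intro b
    rw [Lmk]
    exact uniq _ 0 (b : T) hA.1 b.2 (by simp)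
  · intro a b ha hb
    exact uniq _ a b ha hb rfl
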